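/- Let 0 < r < R < π and 0 < δ < (1/2) sin R. Set λ = sin r / sin R and c = 1 − 2δ/(sin R + δ). Then for all s, t ∈ [R − δ, R] and all θ ∈ [0, π], writing s' = r − λ(R − s) and t' = r − λ(R − t), one has c² λ² · (sin²((s − t)/2) + sin²(θ/2) · sin s · sin t) ≤ sin²((s' − t')/2) + sin²(θ/2) · sin s' · sin t' ≤ c⁻² λ² · (sin²((s − t)/2) + sin²(θ/2) · sin s · sin t). -/

import Mathlib

open Real

private lemma sin_lip (a b : ℝ) : |Real.sin a - Real.sin b| ≤ |a - b| := by
  rw [Real.sin_sub_sin]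
  calc |2 * Real.sin ((a - b) / 2) * Real.cos ((a + b) / 2)|
      = 2 * |Real.sin ((a - b) / 2)| * |Real.cos ((a + b) / 2)| := by
        rw [abs_mul, abs_mul]; norm_num
    _ ≤ 2 * |(a - b) / 2| * 1 :=
        mul_le_mul (mul_le_mul_of_nonneg_left Real.abs_sin_le_abs (by norm_num))
          (Real.abs_cos_le_one _) (abs_nonneg _) (by positivity)
    _ = |a - b| := by rw [abs_div, abs_two]; ring

private lemma sin_ratio_aux (lam c v : ℝ) (hlam : 0 < lam) (hc : 0 < c)
    (hv : 0 ≤ v) (hv1 : v ≤ 1) (hlv : lam * v ≤ 1)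
    (h1 : c ≤ 1 - (lam * v) ^ 2 / 4) (h2 : c ≤ 1 - v ^ 2 / 4) :
    c * lam * Real.sin v ≤ Real.sin (lam * v) ∧
      Real.sin (lam * v) ≤ c⁻¹ * lam * Real.sin v := by
  rcases eq_or_lt_of_le hv with h0 | h0
  · rw [← h0]; norm_num
  · have hlv0 : 0 < lam * v := mul_pos hlam h0
    have hsv : Real.sin v < v := Real.sin_lt h0
    have hsv' : Real.sin (lam * v) < lam * v := Real.sin_lt hlv0
    have hcube : lam * v - (lam * v) ^ 3 / 4 < Real.sin (lam * v) :=
      by nlinarith [Real.sin_gt_sub_cube hlv0, pow_pos hlv0 3]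
    have hcube2 : v - v ^ 3 / 4 < Real.sin v := by
      nlinarith [Real.sin_gt_sub_cube h0, pow_pos h0 3]
    constructor
    · nlinarith [mul_le_mul_of_nonneg_left hsv.le (mul_nonneg hc.le hlam.le),
        mul_le_mul_of_nonneg_left h1 hlv0.le]
    · rw [show c⁻¹ * lam * Real.sin v = lam * Real.sin v / c by field_simp,
        le_div_iff₀ hc]
      nlinarith [mul_le_mul_of_nonneg_left h2 hlv0.le,
        mul_le_mul_of_nonneg_left hsv'.le hc.le,
        mul_lt_mul_of_pos_left hcube2 hlam]

private lemma aux_radial (r R δ lam c s : ℝ)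
    (hS : 0 < Real.sin R) (hδ0 : 0 < δ) (hδS : 2 * δ < Real.sin R)
    (hlam : 0 < lam) (hlamS : lam * Real.sin R = Real.sin r)
    (hc : c = (Real.sin R - δ) / (Real.sin R + δ))
    (hs1 : R - δ ≤ s) (hs2 : s ≤ R) :
    c * lam * Real.sin s ≤ Real.sin (r - lam * (R - s)) ∧
      Real.sin (r - lam * (R - s)) ≤ c⁻¹ * lam * Real.sin s ∧
      0 < Real.sin s ∧ 0 < Real.sin (r - lam * (R - s)) := by
  have hx0 : 0 ≤ R - s := by linarith
  have hxδ : R - s ≤ δ := by linarith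
  have hc0 : 0 < c := by rw [hc]; apply div_pos <;> linarith
  have hcinv : c⁻¹ = (Real.sin R + δ) / (Real.sin R - δ) := by rw [hc, inv_div]
  -- Lipschitz bounds for sin s
  have h1 : |Real.sin s - Real.sin R| ≤ R - s := by
    have := sin_lip s R
    rwa [abs_sub_comm s R, abs_of_nonneg hx0] at this
  obtain ⟨h1a, h1b⟩ := abs_le.mp h1
  have hub : Real.sin s ≤ Real.sin R + (R - s) := by linarith
  have hlb : Real.sin R - (R - s) ≤ Real.sin s := by linarith
  -- Lipschitz bounds for sin s'
  have h2 : |Real.sin (r - lam * (R - s)) - Real.sin r| ≤ lam * (R - s) := by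
    have := sin_lip (r - lam * (R - s)) r
    rwa [show r - lam * (R - s) - r = -(lam * (R - s)) by ring, abs_neg,
      abs_of_nonneg (mul_nonneg hlam.le hx0)] at this
  obtain ⟨h2a, h2b⟩ := abs_le.mp h2
  have hub' : Real.sin (r - lam * (R - s)) ≤ Real.sin r + lam * (R - s) := by linarith
  have hlb' : Real.sin r - lam * (R - s) ≤ Real.sin (r - lam * (R - s)) := by linarith
  have hss0 : 0 < Real.sin s := by linarith
  have hss'0 : 0 < Real.sin (r - lam * (R - s)) := by
    have : lam * (R - s) ≤ lam * δ := mul_le_mul_of_nonneg_left hxδ hlam.le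
    nlinarith [mul_lt_mul_of_pos_left hδS hlam]
  refine ⟨?_, ?_, hss0, hss'0⟩
  · have key : c * (Real.sin R + (R - s)) ≤ Real.sin R - (R - s) := by
      rw [hc, div_mul_eq_mul_div, div_le_iff₀ (by linarith)]
      nlinarith [mul_le_mul_of_nonneg_left hxδ hS.le]
    nlinarith [mul_le_mul_of_nonneg_left hub (mul_nonneg hc0.le hlam.le),
      mul_le_mul_of_nonneg_left key hlam.le]
  · have key2 : Real.sin R + (R - s) ≤ c⁻¹ * (Real.sin R - (R - s)) := by
      rw [hcinv, div_mul_eq_mul_div, le_div_iff₀ (by linarith)]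
      nlinarith [mul_le_mul_of_nonneg_left hxδ hS.le]
    have hci : 0 ≤ c⁻¹ := inv_nonneg.mpr hc0.le
    nlinarith [mul_le_mul_of_nonneg_left key2 hlam.le,
      mul_le_mul_of_nonneg_left hlb (mul_nonneg hci hlam.le)]

set_option maxHeartbeats 1000000 in
/-- Lemma 4.5, case κ = 1: the radial contraction of the annulus [R−δ, R] onto
[r−λδ, r] is almost bi-Lipschitz with ratio λ = sin r / sin R, measured via sin
of half-distances through the half-angle spherical cosine law. -/
theorem radial_contraction_biLipschitz_sphere
    (r R δ lam c : ℝ) (hr : 0 < r) (hrR : r < R) (hRπ : R < π)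
    (hδ0 : 0 < δ) (hδ : δ < (1 / 2) * Real.sin R)
    (hlam : lam = Real.sin r / Real.sin R)
    (hc : c = 1 - 2 * δ / (Real.sin R + δ))
    (s t θ : ℝ) (hs : s ∈ Set.Icc (R - δ) R) (ht : t ∈ Set.Icc (R - δ) R)
    (hθ : θ ∈ Set.Icc 0 π) :
    c ^ 2 * lam ^ 2 *
        (Real.sin ((s - t) / 2) ^ 2 + Real.sin (θ / 2) ^ 2 * Real.sin s * Real.sin t) ≤
      Real.sin (((r - lam * (R - s)) - (r - lam * (R - t))) / 2) ^ 2 +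
        Real.sin (θ / 2) ^ 2 * Real.sin (r - lam * (R - s)) * Real.sin (r - lam * (R - t)) ∧
    Real.sin (((r - lam * (R - s)) - (r - lam * (R - t))) / 2) ^ 2 +
        Real.sin (θ / 2) ^ 2 * Real.sin (r - lam * (R - s)) * Real.sin (r - lam * (R - t)) ≤
      c⁻¹ ^ 2 * lam ^ 2 *
        (Real.sin ((s - t) / 2) ^ 2 + Real.sin (θ / 2) ^ 2 * Real.sin s * Real.sin t) := by
  have hR0 : 0 < R := hr.trans hrR
  have hrπ : r < π := hrR.trans hRπ
  have hS : 0 < Real.sin R := Real.sin_pos_of_pos_of_lt_pi hR0 hRπ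
  have hsr : 0 < Real.sin r := Real.sin_pos_of_pos_of_lt_pi hr hrπ
  have hsr1 : Real.sin r ≤ 1 := Real.sin_le_one r
  have hS1 : Real.sin R ≤ 1 := Real.sin_le_one R
  have hlam0 : 0 < lam := by rw [hlam]; positivity
  have hlamS : lam * Real.sin R = Real.sin r := by
    rw [hlam]; field_simp
  have hδS : 2 * δ < Real.sin R := by linarith
  have hc' : c = (Real.sin R - δ) / (Real.sin R + δ) := by
    rw [hc]; field_simp; ring
  have hc0 : 0 < c := by rw [hc']; apply div_pos <;> linarith
  obtain ⟨hs1, hs2⟩ := hs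
  obtain ⟨ht1, ht2⟩ := ht
  obtain ⟨hsl, hsh, hss0, hss'0⟩ :=
    aux_radial r R δ lam c s hS hδ0 hδS hlam0 hlamS hc' hs1 hs2
  obtain ⟨htl, hth, htt0, htt'0⟩ :=
    aux_radial r R δ lam c t hS hδ0 hδS hlam0 hlamS hc' ht1 ht2
  have hq : 0 ≤ Real.sin (θ / 2) ^ 2 := sq_nonneg _
  have hprodl : c * lam * Real.sin s * (c * lam * Real.sin t) ≤
      Real.sin (r - lam * (R - s)) * Real.sin (r - lam * (R - t)) :=
    mul_le_mul hsl htl (mul_nonneg (mul_nonneg hc0.le hlam0.le) htt0.le) hss'0.le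
  have hprodh : Real.sin (r - lam * (R - s)) * Real.sin (r - lam * (R - t)) ≤
      c⁻¹ * lam * Real.sin s * (c⁻¹ * lam * Real.sin t) :=
    mul_le_mul hsh hth htt'0.le
      (mul_nonneg (mul_nonneg (inv_nonneg.mpr hc0.le) hlam0.le) hss0.le)
  -- the angle term
  have hstδ : |s - t| ≤ δ := abs_le.mpr ⟨by linarith, by linarith⟩
  have hv0 : 0 ≤ |s - t| / 2 := by positivity
  have hv2 : |s - t| / 2 ≤ δ / 2 := by linarith
  have hδhalf : δ ≤ 1 / 2 := by linarith
  have hv1 : |s - t| / 2 ≤ 1 := by linarith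
  have hlamδ : lam * δ ≤ Real.sin r / 2 := by
    nlinarith only [mul_lt_mul_of_pos_left hδ hlam0, hlamS]
  have e2 : lam * (|s - t| / 2) ≤ lam * (δ / 2) := mul_le_mul_of_nonneg_left hv2 hlam0.le
  have e0 : 0 ≤ lam * (|s - t| / 2) := mul_nonneg hlam0.le hv0
  have hlv : lam * (|s - t| / 2) ≤ 1 := by nlinarith only [e2, hlamδ, hsr1, hsr]
  have e3 : (lam * (|s - t| / 2)) ^ 2 ≤ (lam * δ) ^ 2 / 4 := by nlinarith only [mul_le_mul e2 e2 e0 (e0.trans e2)]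
  have hsrsq : Real.sin r * Real.sin r ≤ 1 :=
    by simpa using mul_le_mul hsr1 hsr1 hsr.le zero_le_one
  have e5 : (lam * δ) ^ 2 ≤ 1 / 4 := by
    nlinarith only [mul_le_mul hlamδ hlamδ (mul_nonneg hlam0.le hδ0.le)
      (by linarith : (0:ℝ) ≤ Real.sin r / 2), hsrsq]
  have e6 : lam * δ * (lam * Real.sin R) ≤ 1 / 2 := by
    rw [hlamS]
    nlinarith only [mul_le_mul_of_nonneg_right hlamδ hsr.le, hsrsq]
  have hSδ : (0:ℝ) ≤ Real.sin R + δ := by linarith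
  have t2a : (lam * δ) ^ 2 * Real.sin R ≤ δ / 2 := by
    nlinarith only [mul_le_mul_of_nonneg_left e6 hδ0.le]
  have t2b : (lam * δ) ^ 2 * δ ≤ δ / 4 := by
    nlinarith only [mul_le_mul_of_nonneg_left e5 hδ0.le]
  have t2 : (lam * δ) ^ 2 * (Real.sin R + δ) ≤ 3 * δ / 4 := by nlinarith only [t2a, t2b]
  have eA : (lam * (|s - t| / 2)) ^ 2 * (Real.sin R + δ) ≤ 8 * δ := by
    nlinarith only [mul_le_mul_of_nonneg_right e3 hSδ, t2, hδ0]
  have hkey1 : c ≤ 1 - (lam * (|s - t| / 2)) ^ 2 / 4 := by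
    rw [hc', div_le_iff₀ (by linarith)]
    nlinarith only [eA, hδ0]
  have f1 : (|s - t| / 2) ^ 2 ≤ δ ^ 2 / 4 := by nlinarith only [mul_le_mul hv2 hv2 hv0 (hv0.trans hv2)]
  have g1 : δ ^ 2 ≤ δ / 2 := by nlinarith only [hδ0, hδhalf]
  have f2 : δ ^ 2 * (Real.sin R + δ) ≤ 3 * δ / 4 := by
    nlinarith only [g1, mul_le_mul_of_nonneg_left hS1 (sq_nonneg δ),
      mul_le_mul g1 hδhalf hδ0.le (by linarith : (0:ℝ) ≤ δ / 2)]
  have eB : (|s - t| / 2) ^ 2 * (Real.sin R + δ) ≤ 8 * δ := by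
    nlinarith only [mul_le_mul_of_nonneg_right f1 hSδ, f2, hδ0]
  have hkey2 : c ≤ 1 - (|s - t| / 2) ^ 2 / 4 := by
    rw [hc', div_le_iff₀ (by linarith)]
    nlinarith only [eB, hδ0]
  obtain ⟨hAl, hAh⟩ := sin_ratio_aux lam c (|s - t| / 2) hlam0 hc0 hv0 hv1 hlv hkey1 hkey2
  have hpi3 : (3:ℝ) < π := by linarith [Real.pi_gt_three]
  have hsq1 : Real.sin ((s - t) / 2) ^ 2 = Real.sin (|s - t| / 2) ^ 2 := by
    rcases abs_cases (s - t) with ⟨h, _⟩ | ⟨h, _⟩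
    · rw [h]
    · rw [h, show -(s - t) / 2 = -((s - t) / 2) by ring, Real.sin_neg, neg_sq]
  have hsq2 : Real.sin (lam * (s - t) / 2) ^ 2 = Real.sin (lam * (|s - t| / 2)) ^ 2 := by
    rcases abs_cases (s - t) with ⟨h, _⟩ | ⟨h, _⟩
    · rw [h, show lam * ((s - t) / 2) = lam * (s - t) / 2 by ring]
    · rw [h, show lam * (-(s - t) / 2) = -(lam * (s - t) / 2) by ring,
        Real.sin_neg, neg_sq]
  have hA2l : c ^ 2 * lam ^ 2 * Real.sin ((s - t) / 2) ^ 2 ≤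
      Real.sin (lam * (s - t) / 2) ^ 2 := by
    rw [hsq1, hsq2]
    have h0 : 0 ≤ c * lam * Real.sin (|s - t| / 2) :=
      mul_nonneg (mul_nonneg hc0.le hlam0.le)
        (Real.sin_nonneg_of_nonneg_of_le_pi hv0 (by linarith))
    nlinarith only [pow_le_pow_left₀ h0 hAl 2]
  have hA2h : Real.sin (lam * (s - t) / 2) ^ 2 ≤
      c⁻¹ ^ 2 * lam ^ 2 * Real.sin ((s - t) / 2) ^ 2 := by
    rw [hsq1, hsq2]
    have h0 : 0 ≤ Real.sin (lam * (|s - t| / 2)) :=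
      Real.sin_nonneg_of_nonneg_of_le_pi e0 (by linarith)
    nlinarith only [pow_le_pow_left₀ h0 hAh 2]
  rw [show (r - lam * (R - s)) - (r - lam * (R - t)) = lam * (s - t) by ring]
  constructor
  · nlinarith only [hA2l, mul_le_mul_of_nonneg_left hprodl hq]
  · nlinarith only [hA2h, mul_le_mul_of_nonneg_left hprodh hq]
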